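/- Suppose integers n ≥ 2, ε, r, s, t satisfy: k = ε(n-1) - 2r, s + t = -ε - r, s·t is an integer, and (n-1)(s² + t²) = 3nk - k² - (n+1)r². Then 2(n-1) divides 6r(r+1); in particular (n-1) divides 3r(r+1). -/
import Mathlib


theorem stmt13 (n ε r k : ℤ) (hn : 2 ≤ n) (s t : ℝ)
    (hk : k = ε * (n - 1) - 2 * r)
    (hst : s + t = -(ε : ℝ) - (r : ℝ))
    (hint : ∃ m : ℤ, s * t = (m : ℝ))
    (h2 : ((n : ℝ) - 1) * (s ^ 2 + t ^ 2)
        = 3 * (n : ℝ) * (k : ℝ) - (k : ℝ) ^ 2 - ((n : ℝ) + 1) * (r : ℝ) ^ 2) :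
    (2 * (n - 1)) ∣ 6 * r * (r + 1) ∧ (n - 1) ∣ 3 * r * (r + 1) := by
  obtain ⟨m, hm⟩ := hint
  have hs2 : s ^ 2 + t ^ 2 = (s + t) ^ 2 - 2 * (s * t) := by ring
  rw [hs2, hst, hm] at h2
  have hZ : (n - 1) * ((-ε - r) ^ 2 - 2 * m)
      = 3 * n * k - k ^ 2 - (n + 1) * r ^ 2 := by exact_mod_cast h2
  obtain ⟨c, hc⟩ := Int.even_mul_succ_self ε
  have hB : 6 * r * (r + 1)
      = 2 * (n - 1) * (-(n * c - 2 * n * ε - ε * r + r ^ 2 + 3 * r - m)) := by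
    subst hk
    linear_combination hZ - n * (n - 1) * hc
  refine ⟨⟨_, hB⟩, ⟨-(n * c - 2 * n * ε - ε * r + r ^ 2 + 3 * r - m), by linarith⟩⟩
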